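/- Let Γ = ⟨α, β⟩ with α, β coprime, 2 ≤ α < β, and let Δ be a Γ-semimodule whose minimal system of generators has exactly n + 1 ≥ 2 elements. Then the iterated syzygy Syz^(n+1)(Δ) is isomorphic to Δ, i.e. there exists c ∈ ℤ such that Syz^(n+1)(Δ) = c + Δ; in other words, the sequence of semimodule syzygies Syz^(k)(Δ), k ∈ ℕ, is periodic up to isomorphism with period n + 1. -/

import Mathlib

/-- The numerical semigroup `⟨α, β⟩ = {pα + qβ : p, q ∈ ℕ}`, viewed inside `ℤ`. -/
def Gamma (α β : ℕ) : Set ℤ := {x : ℤ | ∃ p q : ℕ, x = (p : ℤ) * α + (q : ℤ) * β}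

/-- The dual `Δ* = {c ∈ ℤ : c + Δ ⊆ ⟨α,β⟩}` of an `⟨α,β⟩`-semimodule. -/
def dualSet (α β : ℕ) (Δ : Set ℤ) : Set ℤ := {c : ℤ | ∀ x ∈ Δ, c + x ∈ Gamma α β}

/-- The minimal system of generators of an `⟨α,β⟩`-semimodule `Δ`: those `x ∈ Δ`
which cannot be written as `y + γ` with `y ∈ Δ` and `0 ≠ γ ∈ ⟨α,β⟩`. -/
def minGenSet (α β : ℕ) (Δ : Set ℤ) : Set ℤ :=
  {x ∈ Δ | ∀ γ ∈ Gamma α β, γ ≠ 0 → x - γ ∉ Δ}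

/-- The syzygy of an `⟨α,β⟩`-semimodule `Δ` with minimal system of generators `E`:
`Syz(Δ) = ⋃_{i,i' ∈ E, i ≠ i'} ((i + Γ) ∩ (i' + Γ))`. -/
def Syz (α β : ℕ) (Δ : Set ℤ) : Set ℤ :=
  ⋃ i ∈ minGenSet α β Δ, ⋃ j ∈ minGenSet α β Δ, ⋃ (_ : i ≠ j),
    ((fun γ => i + γ) '' Gamma α β) ∩ ((fun γ => j + γ) '' Gamma α β)

namespace SyzAux

lemma mem_gamma_iff {α β : ℕ} {x : ℤ} :
    x ∈ Gamma α β ↔ ∃ p q : ℤ, 0 ≤ p ∧ 0 ≤ q ∧ x = p * α + q * β := by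
  constructor
  · rintro ⟨p, q, rfl⟩
    exact ⟨p, q, Int.ofNat_nonneg p, Int.ofNat_nonneg q, rfl⟩
  · rintro ⟨p, q, hp, hq, rfl⟩
    exact ⟨p.toNat, q.toNat, by rw [Int.toNat_of_nonneg hp, Int.toNat_of_nonneg hq]⟩

lemma gamma_add {α β : ℕ} {x y : ℤ} (hx : x ∈ Gamma α β) (hy : y ∈ Gamma α β) :
    x + y ∈ Gamma α β := by
  rw [mem_gamma_iff] at *
  obtain ⟨p, q, hp, hq, rfl⟩ := hx
  obtain ⟨p', q', hp', hq', rfl⟩ := hy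
  exact ⟨p + p', q + q', by linarith, by linarith, by ring⟩

/-- Members of `Γ` built from a `β`-part `q ∈ [0,α)` plus a nonneg multiple of `α`. -/
lemma gamma_mem_of {α β : ℕ} {x q : ℤ} (hq : 0 ≤ q) (hd : (α : ℤ) ∣ x - q * β)
    (hle : q * β ≤ x) (hα : 0 < α) : x ∈ Gamma α β := by
  obtain ⟨m, hm⟩ := hd
  have hm0 : 0 ≤ m := by
    nlinarith [hm, hle, Int.natCast_pos.mpr hα]
  rw [mem_gamma_iff]
  exact ⟨m, q, hm0, hq, by linarith⟩

/-- Canonical form: any `x ∈ Γ` can be written with `β`-coefficient in `[0, α)`. -/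
lemma gamma_canonical {α β : ℕ} (hα : 0 < α) {x : ℤ} (hx : x ∈ Gamma α β) :
    ∃ q : ℤ, 0 ≤ q ∧ q < α ∧ (α : ℤ) ∣ x - q * β ∧ q * β ≤ x := by
  rw [mem_gamma_iff] at hx
  obtain ⟨p, q, hp, hq, rfl⟩ := hx
  have hα' : (0:ℤ) < α := Int.natCast_pos.mpr hα
  refine ⟨q % α, Int.emod_nonneg q (by positivity), Int.emod_lt_of_pos q hα', ⟨p + (q / α) * β, ?_⟩, ?_⟩
  · have := Int.emod_add_mul_ediv q α
    nlinarith [this]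
  · have h2 : 0 ≤ q / α := Int.ediv_nonneg hq (le_of_lt hα')
    have h3 := Int.emod_add_mul_ediv q α
    have hβ : (0:ℤ) ≤ β := Int.ofNat_nonneg β
    nlinarith [mul_nonneg hp (le_of_lt hα'), mul_nonneg (mul_nonneg (le_of_lt hα') h2) hβ]


lemma isCoprime_int {α β : ℕ} (hcop : Nat.Coprime α β) : IsCoprime (α:ℤ) (β:ℤ) :=
  Int.isCoprime_iff_gcd_eq_one.mpr (by simpa using hcop)

/-- If `α ∣ c * β` with `α, β` coprime then `α ∣ c`. -/
lemma dvd_of_dvd_mul_beta {α β : ℕ} (hcop : Nat.Coprime α β) {c : ℤ}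
    (h : (α:ℤ) ∣ c * β) : (α:ℤ) ∣ c :=
  (isCoprime_int hcop).dvd_of_dvd_mul_right h

lemma eq_of_small_dvd {α : ℕ} {c : ℤ} (h : (α:ℤ) ∣ c) (h1 : -(α:ℤ) < c) (h2 : c < α) :
    c = 0 :=
  Int.eq_zero_of_abs_lt_dvd h (abs_lt.mpr ⟨h1, h2⟩)

/-- Every residue class mod `α` is of the form `s * β` for some `s`. -/
lemma exists_class {α β : ℕ} (hcop : Nat.Coprime α β) (x : ℤ) :
    ∃ s : ℤ, (α:ℤ) ∣ x - s * β := by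
  obtain ⟨u, v, huv⟩ := isCoprime_int (Nat.Coprime.symm hcop)
  exact ⟨u * x, ⟨v * x, by have : u * (β:ℤ) + v * α = 1 := huv; linear_combination (-x) * huv⟩⟩


/-- A "profile" records, for each `s : ℤ`, the minimal element of a semimodule
in the residue class of `s * β` mod `α`. -/
def IsProfile (α β : ℕ) (F : ℤ → ℤ) : Prop :=
  (∀ s, F (s + α) = F s) ∧ (∀ s, (α:ℤ) ∣ F s - s * β) ∧ (∀ s, F (s + 1) ≤ F s + β)

/-- The semimodule determined by a profile. -/
def ProfSet (α : ℕ) (F : ℤ → ℤ) : Set ℤ := {x | ∃ s, F s ≤ x ∧ (α:ℤ) ∣ x - F s}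

/-- Positions of minimal generators of the semimodule of a profile. -/
def PosF (β : ℕ) (F : ℤ → ℤ) : Set ℤ := {s | F s < F (s - 1) + β}

section Profile

variable {α β : ℕ} {F : ℤ → ℤ}

lemma F_periodic (hF : IsProfile α β F) (s k : ℤ) : F (s + k * α) = F s := by
  induction k using Int.induction_on with
  | zero => simp
  | succ m ih => have := hF.1 (s + m * α); rw [← this] at ih; rw [← ih]; ring_nf
  | pred m ih =>
      have := hF.1 (s + (-(m:ℤ) - 1) * α)
      rw [← ih, ← this]; ring_nf

lemma F_congr (hF : IsProfile α β F) {s s' : ℤ} (h : (α:ℤ) ∣ s' - s) : F s' = F s := by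
  obtain ⟨k, hk⟩ := h
  have : s' = s + k * α := by linarith
  rw [this]; exact F_periodic hF s k

lemma F_mono_aux (hF : IsProfile α β F) (a : ℤ) (m : ℕ) :
    F (a + m) ≤ F a + (m:ℤ) * β := by
  induction m with
  | zero => simp
  | succ m ih =>
      have h1 := hF.2.2 (a + (m:ℤ))
      have : a + ((m:ℕ)+1:ℕ) = (a + (m:ℤ)) + 1 := by push_cast; ring
      rw [this]
      push_cast
      linarith

lemma F_mono (hF : IsProfile α β F) {a b : ℤ} (h : a ≤ b) : F b ≤ F a + (b - a) * β := by
  obtain ⟨m, hm⟩ := Int.le.dest h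
  have : b = a + (m:ℤ) := by omega
  subst this
  have := F_mono_aux hF a m
  simpa using this

lemma F_flat_aux (hF : IsProfile α β F) (a : ℤ) (m : ℕ)
    (hfree : ∀ u, a < u → u ≤ a + (m:ℤ) → u ∉ PosF β F) :
    F (a + (m:ℤ)) = F a + (m:ℤ) * β := by
  induction m with
  | zero => simp
  | succ m ih =>
      have h1 := hF.2.2 (a + (m:ℤ))
      have h2 : (a + (m:ℤ)) + 1 ∉ PosF β F := hfree _ (by omega) (by push_cast; omega)
      simp only [PosF, Set.mem_setOf_eq, not_lt, add_sub_cancel_right] at h2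
      have h3 := ih (fun u hu hu' => hfree u hu (by push_cast; omega))
      have : a + ((m:ℕ)+1:ℕ) = (a + (m:ℤ)) + 1 := by push_cast; ring
      rw [this]
      have h4 : F ((a + (m:ℤ)) + 1) = F (a + (m:ℤ)) + β := le_antisymm h1 h2
      rw [h4, h3]
      push_cast
      ring

lemma F_flat (hF : IsProfile α β F) {a b : ℤ}
    (hfree : ∀ u, a < u → u ≤ b → u ∉ PosF β F) (h : a ≤ b) :
    F b = F a + (b - a) * β := by
  obtain ⟨m, hm⟩ := Int.le.dest h
  have hb : b = a + (m:ℤ) := by omega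
  subst hb
  have := F_flat_aux hF a m (by simpa using hfree)
  simpa using this

lemma F_class (hF : IsProfile α β F) (s : ℤ) : (α:ℤ) ∣ F s - s * β := hF.2.1 s

lemma F_inj (hF : IsProfile α β F) (hcop : Nat.Coprime α β) {s s' : ℤ}
    (h : F s = F s') : (α:ℤ) ∣ s - s' := by
  have h1 := hF.2.1 s
  have h2 := hF.2.1 s'
  have key : (s - s') * β = (F s' - s' * β) - (F s - s * β) := by rw [h]; ring
  exact dvd_of_dvd_mul_beta hcop (key ▸ dvd_sub h2 h1)

lemma mem_prof_iff (hF : IsProfile α β F) (hcop : Nat.Coprime α β) {x s : ℤ}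
    (hs : (α:ℤ) ∣ x - s * β) : x ∈ ProfSet α F ↔ F s ≤ x := by
  constructor
  · rintro ⟨s', h1, h2⟩
    have hd : (α:ℤ) ∣ (s' - s) * β := by
      have : (s' - s) * β = (x - s * β) - (x - F s') - (F s' - s' * β) := by ring
      rw [this]
      exact dvd_sub (dvd_sub hs h2) (hF.2.1 s')
    have : F s' = F s := F_congr hF (dvd_of_dvd_mul_beta hcop hd)
    rwa [this] at h1
  · intro h
    refine ⟨s, h, ?_⟩
    have := hF.2.1 s
    have : x - F s = (x - s * β) - (F s - s * β) := by ring
    rw [this]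
    exact dvd_sub hs (hF.2.1 s)

lemma F_mem_prof (hF : IsProfile α β F) (s : ℤ) : F s ∈ ProfSet α F :=
  ⟨s, le_refl _, by simp⟩

end Profile


/-! ### The "previous position" function for a periodic set of positions -/

open Classical in
/-- The greatest element of `P` that is `≤ s` (junk value if none exists). -/
noncomputable def prevP (P : Set ℤ) (s : ℤ) : ℤ :=
  if h : ∃ u, u ∈ P ∧ u ≤ s ∧ ∀ v ∈ P, v ≤ s → v ≤ u then h.choose else 0

section PrevP

variable {α : ℕ} {P : Set ℤ}

/-- Periodicity in both directions. -/
lemma per_shift (hper : ∀ u : ℤ, u ∈ P ↔ u + (α:ℤ) ∈ P) (u : ℤ) (k : ℤ) (hu : u ∈ P) :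
    u + k * α ∈ P := by
  induction k using Int.induction_on with
  | zero => simpa using hu
  | succ m ih =>
      rw [show u + ((m:ℤ)+1) * α = (u + (m:ℤ) * α) + α by ring]
      exact (hper _).mp ih
  | pred m ih =>
      rw [show u + (-(m:ℤ)) * α = (u + (-(m:ℤ) - 1) * α) + α by ring] at ih
      exact (hper _).mpr ih

lemma exists_greatest (hα : 0 < α) (hne : P.Nonempty)
    (hper : ∀ u : ℤ, u ∈ P ↔ u + (α:ℤ) ∈ P) (s : ℤ) :
    ∃ u, u ∈ P ∧ u ≤ s ∧ ∀ v ∈ P, v ≤ s → v ≤ u := by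
  obtain ⟨u0, hu0⟩ := hne
  have hα' : (0:ℤ) < α := Int.natCast_pos.mpr hα
  -- an element of P in the window (s-α, s]
  have hwin : ∃ w, w ∈ P ∧ s - α < w ∧ w ≤ s := by
    refine ⟨u0 + ((s - u0) / α) * α, per_shift hper u0 _ hu0, ?_, ?_⟩
    · have h1 := Int.emod_lt_of_pos (s - u0) hα'
      have h2 := Int.emod_add_mul_ediv (s - u0) (α:ℤ)
      nlinarith
    · have h1 := Int.emod_nonneg (s - u0) (by positivity : (α:ℤ) ≠ 0)
      have h2 := Int.emod_add_mul_ediv (s - u0) (α:ℤ)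
      nlinarith
  obtain ⟨w, hw, hw1, hw2⟩ := hwin
  obtain ⟨ub, ⟨hub1, hub2⟩, hub3⟩ :=
    Int.exists_greatest_of_bdd (P := fun z => z ∈ P ∧ z ≤ s)
      ⟨s, fun z hz => hz.2⟩ ⟨w, hw, hw2⟩
  exact ⟨ub, hub1, hub2, fun v hv hvs => hub3 v ⟨hv, hvs⟩⟩

lemma prevP_spec (hα : 0 < α) (hne : P.Nonempty)
    (hper : ∀ u : ℤ, u ∈ P ↔ u + (α:ℤ) ∈ P) (s : ℤ) :
    prevP P s ∈ P ∧ prevP P s ≤ s ∧ ∀ v ∈ P, v ≤ s → v ≤ prevP P s := by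
  have h := exists_greatest hα hne hper s
  classical
  rw [prevP]
  rw [dif_pos h]
  exact h.choose_spec

/-- Uniqueness of the greatest element. -/
lemma prevP_eq (hα : 0 < α) (hne : P.Nonempty)
    (hper : ∀ u : ℤ, u ∈ P ↔ u + (α:ℤ) ∈ P) {s u : ℤ}
    (hu : u ∈ P) (h1 : u ≤ s) (h2 : ∀ v ∈ P, v ≤ s → v ≤ u) : prevP P s = u := by
  obtain ⟨m1, m2, m3⟩ := prevP_spec hα hne hper s
  exact le_antisymm (h2 _ m1 m2) (m3 u hu h1)

lemma prevP_gt (hα : 0 < α) (hne : P.Nonempty)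
    (hper : ∀ u : ℤ, u ∈ P ↔ u + (α:ℤ) ∈ P) (s : ℤ) : s - α < prevP P s := by
  obtain ⟨m1, m2, m3⟩ := prevP_spec hα hne hper s
  obtain ⟨u0, hu0⟩ := hne
  have hα' : (0:ℤ) < α := Int.natCast_pos.mpr hα
  have hwin : ∃ w, w ∈ P ∧ s - α < w ∧ w ≤ s := by
    refine ⟨u0 + ((s - u0) / α) * α, per_shift hper u0 _ hu0, ?_, ?_⟩
    · have h1 := Int.emod_lt_of_pos (s - u0) hα'
      have h2 := Int.emod_add_mul_ediv (s - u0) (α:ℤ)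
      nlinarith
    · have h1 := Int.emod_nonneg (s - u0) (by positivity : (α:ℤ) ≠ 0)
      have h2 := Int.emod_add_mul_ediv (s - u0) (α:ℤ)
      nlinarith
  obtain ⟨w, hw, hw1, hw2⟩ := hwin
  exact lt_of_lt_of_le hw1 (m3 w hw hw2)

lemma prevP_shift (hα : 0 < α) (hne : P.Nonempty)
    (hper : ∀ u : ℤ, u ∈ P ↔ u + (α:ℤ) ∈ P) (s : ℤ) :
    prevP P (s + α) = prevP P s + α := by
  obtain ⟨m1, m2, m3⟩ := prevP_spec hα hne hper s
  refine prevP_eq hα hne hper ((hper _).mp m1) (by omega) ?_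
  intro v hv hvs
  have hv' : v - α ∈ P := (hper (v - α)).mpr (by simpa using hv)
  have := m3 _ hv' (by omega)
  omega

lemma prevP_self (hα : 0 < α) (hne : P.Nonempty)
    (hper : ∀ u : ℤ, u ∈ P ↔ u + (α:ℤ) ∈ P) {s : ℤ} (hs : s ∈ P) : prevP P s = s :=
  prevP_eq hα hne hper hs le_rfl (fun v _ h => h)

lemma prevP_of_not_mem (hα : 0 < α) (hne : P.Nonempty)
    (hper : ∀ u : ℤ, u ∈ P ↔ u + (α:ℤ) ∈ P) {s : ℤ} (hs : s ∉ P) :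
    prevP P s = prevP P (s - 1) := by
  obtain ⟨m1, m2, m3⟩ := prevP_spec hα hne hper (s - 1)
  refine prevP_eq hα hne hper m1 (by omega) ?_
  intro v hv hvs
  rcases eq_or_lt_of_le hvs with h | h
  · exact absurd (h ▸ hv) hs
  · exact m3 v hv (by omega)

/-- No elements of `P` strictly between `prevP P s` and `s`. -/
lemma prevP_free (hα : 0 < α) (hne : P.Nonempty)
    (hper : ∀ u : ℤ, u ∈ P ↔ u + (α:ℤ) ∈ P) (s : ℤ) :
    ∀ u, prevP P s < u → u ≤ s → u ∉ P := by
  intro u h1 h2 hu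
  obtain ⟨m1, m2, m3⟩ := prevP_spec hα hne hper s
  exact absurd (m3 u hu h2) (not_le.mpr h1)

/-- One step back: the previous element of `P` strictly below `t`. -/
noncomputable def prevStep (P : Set ℤ) (t : ℤ) : ℤ := prevP P (t - 1)

lemma prev_iter_card (hα : 0 < α) (hne : P.Nonempty)
    (hper : ∀ u : ℤ, u ∈ P ↔ u + (α:ℤ) ∈ P) {s : ℤ} (hs : s ∈ P) (k : ℕ) :
    (prevStep P)^[k] s ∈ P ∧ (prevStep P)^[k] s ≤ s ∧
      (P ∩ Set.Ioc ((prevStep P)^[k] s) s).ncard = k := by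
  induction k with
  | zero => simp [hs]
  | succ k ih =>
      obtain ⟨ih1, ih2, ih3⟩ := ih
      set t := (prevStep P)^[k] s with ht
      have hnext : (prevStep P)^[k+1] s = prevP P (t - 1) := by
        rw [Function.iterate_succ_apply', ← ht]; rfl
      obtain ⟨m1, m2, m3⟩ := prevP_spec hα hne hper (t - 1)
      have hlt : prevP P (t - 1) < t := by omega
      have hsplit : P ∩ Set.Ioc (prevP P (t - 1)) s
          = insert t (P ∩ Set.Ioc t s) := by
        ext u
        simp only [Set.mem_inter_iff, Set.mem_Ioc, Set.mem_insert_iff]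
        constructor
        · rintro ⟨hu, hu1, hu2⟩
          rcases Int.lt_or_le u t with h | h
          · exact absurd (m3 u hu (by omega)) (by omega)
          · rcases eq_or_lt_of_le h with h' | h'
            · exact Or.inl h'.symm
            · exact Or.inr ⟨hu, h', hu2⟩
        · rintro (rfl | ⟨hu, hu1, hu2⟩)
          · exact ⟨ih1, hlt, ih2⟩
          · exact ⟨hu, by omega, hu2⟩
      have hfin : (P ∩ Set.Ioc t s).Finite :=
        (Set.finite_Ioc t s).subset Set.inter_subset_right
      have hcard : (P ∩ Set.Ioc (prevP P (t - 1)) s).ncard = k + 1 := by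
        rw [hsplit, Set.ncard_insert_of_notMem (by simp) hfin, ih3]
      exact ⟨hnext ▸ m1, by omega, by rw [hnext]; exact hcard⟩

lemma prev_iter_period (hα : 0 < α) (hne : P.Nonempty)
    (hper : ∀ u : ℤ, u ∈ P ↔ u + (α:ℤ) ∈ P) {s : ℤ} (hs : s ∈ P) {n : ℕ}
    (hwin : (P ∩ Set.Ioc (s - α) s).ncard = n + 1) :
    (prevStep P)^[n+1] s = s - α := by
  obtain ⟨h1, h2, h3⟩ := prev_iter_card hα hne hper hs n
  set t := (prevStep P)^[n] s with ht
  have hwfin : (P ∩ Set.Ioc (s - (α:ℤ)) s).Finite :=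
    (Set.finite_Ioc _ _).subset Set.inter_subset_right
  have htfin : (P ∩ Set.Ioc t s).Finite :=
    (Set.finite_Ioc _ _).subset Set.inter_subset_right
  have hgt : s - (α:ℤ) < t := by
    by_contra h
    push_neg at h
    have hsub : P ∩ Set.Ioc (s - (α:ℤ)) s ⊆ P ∩ Set.Ioc t s := by
      intro u ⟨hu, hu1, hu2⟩
      exact ⟨hu, by omega, hu2⟩
    have := Set.ncard_le_ncard hsub htfin
    omega
  -- the window is exactly `insert t (P ∩ Ioc t s)`
  have hins : insert t (P ∩ Set.Ioc t s) ⊆ P ∩ Set.Ioc (s - (α:ℤ)) s := by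
    rintro u (rfl | ⟨hu, hu1, hu2⟩)
    · exact ⟨h1, hgt, h2⟩
    · exact ⟨hu, by omega, hu2⟩
  have hcard2 : (insert t (P ∩ Set.Ioc t s)).ncard = n + 1 := by
    rw [Set.ncard_insert_of_notMem (by simp) htfin, h3]
  have heq : insert t (P ∩ Set.Ioc t s) = P ∩ Set.Ioc (s - (α:ℤ)) s :=
    Set.eq_of_subset_of_ncard_le hins (by omega) hwfin
  -- now compute the next step
  have hnext : (prevStep P)^[n+1] s = prevP P (t - 1) := by
    rw [Function.iterate_succ_apply', ← ht]; rfl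
  rw [hnext]
  have hsαP : s - (α:ℤ) ∈ P := by
    have := (hper (s - α)).mpr (by rw [show s - (α:ℤ) + α = s by ring]; exact hs)
    exact this
  refine prevP_eq hα hne hper hsαP (by omega) ?_
  intro v hv hvt
  by_contra hcon
  push_neg at hcon
  have hvmem : v ∈ P ∩ Set.Ioc (s - (α:ℤ)) s := ⟨hv, hcon, by omega⟩
  rw [← heq] at hvmem
  rcases hvmem with rfl | ⟨_, hv1, _⟩
  · omega
  · omega

end PrevP


/-! ### Semimodule structure of `ProfSet` -/

section ProfSemimodule

variable {α β : ℕ} {F : ℤ → ℤ}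

lemma prof_closed (hF : IsProfile α β F) {x γ : ℤ}
    (hx : x ∈ ProfSet α F) (hγ : γ ∈ Gamma α β) : x + γ ∈ ProfSet α F := by
  obtain ⟨s, hle, hdvd⟩ := hx
  rw [mem_gamma_iff] at hγ
  obtain ⟨p, q, hp, hq, rfl⟩ := hγ
  refine ⟨s + q, ?_, ?_⟩
  · have h1 : F (s + q) ≤ F s + (s + q - s) * β := F_mono hF (by omega)
    have hβ : (0:ℤ) ≤ β := Int.ofNat_nonneg β
    have hα : (0:ℤ) ≤ α := Int.ofNat_nonneg α
    nlinarith
  · have h1 := hF.2.1 s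
    have h2 := hF.2.1 (s + q)
    have key : x + (p * α + q * β) - F (s + q)
        = (x - F s) + p * α + ((F s - s * β) - (F (s + q) - (s + q) * β)) := by ring
    rw [key]
    exact dvd_add (dvd_add hdvd ⟨p, mul_comm p (α:ℤ)⟩) (dvd_sub h1 h2)

lemma alpha_mem_gamma {α β : ℕ} : (α:ℤ) ∈ Gamma α β := ⟨1, 0, by push_cast; ring⟩

lemma beta_mem_gamma {α β : ℕ} : (β:ℤ) ∈ Gamma α β := ⟨0, 1, by push_cast; ring⟩

lemma minGen_iff_triple (hF : IsProfile α β F) (hα : 2 ≤ α) (hαβ : α < β) {x : ℤ} :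
    x ∈ minGenSet α β (ProfSet α F) ↔
      x ∈ ProfSet α F ∧ x - α ∉ ProfSet α F ∧ x - β ∉ ProfSet α F := by
  constructor
  · rintro ⟨hx, h⟩
    have hα' : (0:ℤ) < α := by exact_mod_cast (by omega : 0 < α)
    have hβ' : (0:ℤ) < β := by exact_mod_cast (by omega : 0 < β)
    exact ⟨hx, h _ alpha_mem_gamma (by omega), h _ beta_mem_gamma (by omega)⟩
  · rintro ⟨hx, hxa, hxb⟩
    refine ⟨hx, ?_⟩
    intro γ hγ hγ0 hmem
    rw [mem_gamma_iff] at hγ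
    obtain ⟨p, q, hp, hq, rfl⟩ := hγ
    rcases Int.lt_or_le 0 p with hp1 | hp1
    · apply hxa
      have : x - α = (x - (p * α + q * β)) + ((p - 1) * α + q * β) := by ring
      rw [this]
      exact prof_closed hF hmem (mem_gamma_iff.mpr ⟨p - 1, q, by omega, hq, rfl⟩)
    · have hp0 : p = 0 := le_antisymm hp1 hp
      have hq1 : 0 < q := by
        rcases Int.lt_or_le 0 q with h | h
        · exact h
        · exfalso; apply hγ0; have : q = 0 := le_antisymm h hq; rw [hp0, this]; ring
      apply hxb
      have : x - β = (x - (p * α + q * β)) + ((q - 1) * β) := by rw [hp0]; ring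
      rw [this]
      exact prof_closed hF hmem (mem_gamma_iff.mpr ⟨0, q - 1, le_refl _, by omega, by ring⟩)

lemma minGen_prof (hF : IsProfile α β F) (hα : 2 ≤ α) (hαβ : α < β)
    (hcop : Nat.Coprime α β) {x : ℤ} :
    x ∈ minGenSet α β (ProfSet α F) ↔ ∃ s ∈ PosF β F, x = F s := by
  have hα0 : 0 < α := by omega
  rw [minGen_iff_triple hF hα hαβ]
  constructor
  · rintro ⟨⟨s, hle, hdvd⟩, hxa, hxb⟩
    have hcls : (α:ℤ) ∣ (x - α) - s * β := by
      have : (x - α) - s * β = (x - F s) + (F s - s * β) - α := by ring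
      rw [this]
      exact dvd_sub (dvd_add hdvd (hF.2.1 s)) dvd_rfl
    have h1 : ¬ (F s ≤ x - α) := fun h => hxa ((mem_prof_iff hF hcop hcls).mpr h)
    have hx_eq : x = F s := by
      have : x - F s = 0 := eq_of_small_dvd hdvd (by omega) (by omega)
      omega
    subst hx_eq
    refine ⟨s, ?_, rfl⟩
    have hcls' : (α:ℤ) ∣ (F s - β) - (s - 1) * β := by
      have : (F s - β) - (s - 1) * β = F s - s * β := by ring
      rw [this]; exact hF.2.1 s
    have h2 : ¬ (F (s - 1) ≤ F s - β) := fun h => hxb ((mem_prof_iff hF hcop hcls').mpr h)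
    simp only [PosF, Set.mem_setOf_eq]
    omega
  · rintro ⟨s, hs, rfl⟩
    refine ⟨F_mem_prof hF s, ?_, ?_⟩
    · intro hmem
      have hcls : (α:ℤ) ∣ (F s - α) - s * β := by
        have : (F s - α) - s * β = (F s - s * β) - α := by ring
        rw [this]; exact dvd_sub (hF.2.1 s) dvd_rfl
      have := (mem_prof_iff hF hcop hcls).mp hmem
      omega
    · intro hmem
      have hcls : (α:ℤ) ∣ (F s - β) - (s - 1) * β := by
        have : (F s - β) - (s - 1) * β = F s - s * β := by ring
        rw [this]; exact hF.2.1 s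
      have := (mem_prof_iff hF hcop hcls).mp hmem
      simp only [PosF, Set.mem_setOf_eq] at hs
      omega

lemma posF_per (hF : IsProfile α β F) (u : ℤ) :
    u ∈ PosF β F ↔ u + (α:ℤ) ∈ PosF β F := by
  simp only [PosF, Set.mem_setOf_eq]
  rw [hF.1 u, show u + (α:ℤ) - 1 = (u - 1) + α by ring, hF.1 (u - 1)]

/-- The window of positions in `(s₀ - α, s₀]`. -/
lemma minGen_card_eq_window (hF : IsProfile α β F) (hα : 2 ≤ α) (hαβ : α < β)
    (hcop : Nat.Coprime α β) (s₀ : ℤ) :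
    (minGenSet α β (ProfSet α F)).ncard
      = (PosF β F ∩ Set.Ioc (s₀ - α) s₀).ncard := by
  have hα0 : 0 < α := by omega
  have himg : F '' (PosF β F ∩ Set.Ioc (s₀ - α) s₀) = minGenSet α β (ProfSet α F) := by
    ext x
    rw [minGen_prof hF hα hαβ hcop]
    constructor
    · rintro ⟨s, ⟨hs1, _⟩, rfl⟩
      exact ⟨s, hs1, rfl⟩
    · rintro ⟨s, hs, rfl⟩
      -- shift s into the window
      set k := (s₀ - s) / (α:ℤ) with hk
      have h1 := Int.emod_lt_of_pos (s₀ - s) (show (0:ℤ) < α by exact_mod_cast hα0)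
      have h2 := Int.emod_add_mul_ediv (s₀ - s) (α:ℤ)
      have h3 := Int.emod_nonneg (s₀ - s) (show (α:ℤ) ≠ 0 by positivity)
      refine ⟨s + k * α, ⟨per_shift (posF_per hF) s k hs, ?_, ?_⟩, F_periodic hF s k⟩
      · nlinarith
      · nlinarith
  rw [← himg]
  rw [Set.ncard_image_of_injOn]
  intro u hu v hv huv
  have hd : (α:ℤ) ∣ u - v := F_inj hF hcop huv
  have hu2 := hu.2
  have hv2 := hv.2
  simp only [Set.mem_Ioc] at hu2 hv2
  have : u - v = 0 := eq_of_small_dvd hd (by omega) (by omega)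
  omega

end ProfSemimodule


/-! ### The syzygy of a profile -/

/-- The profile of the syzygy module: for each class `s`, the second-smallest
"tower minimum" over the minimal generators. -/
noncomputable def SyzF (α β : ℕ) (F : ℤ → ℤ) : ℤ → ℤ := fun s =>
  F (prevP (PosF β F) (prevP (PosF β F) s - 1))
    + (s - prevP (PosF β F) (prevP (PosF β F) s - 1)) * β

section SyzGeneral

variable {α β : ℕ}

lemma mem_syz_iff {Δ : Set ℤ} {y : ℤ} :
    y ∈ Syz α β Δ ↔ ∃ i ∈ minGenSet α β Δ, ∃ j ∈ minGenSet α β Δ,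
      i ≠ j ∧ y - i ∈ Gamma α β ∧ y - j ∈ Gamma α β := by
  simp only [Syz, Set.mem_iUnion, Set.mem_inter_iff, Set.mem_image]
  constructor
  · rintro ⟨i, hi, j, hj, hij, ⟨⟨γ1, hγ1, e1⟩, ⟨γ2, hγ2, e2⟩⟩⟩
    refine ⟨i, hi, j, hj, hij, ?_, ?_⟩
    · rw [← e1]; simpa using hγ1
    · rw [← e2]; simpa using hγ2
  · rintro ⟨i, hi, j, hj, hij, h1, h2⟩
    exact ⟨i, hi, j, hj, hij, ⟨y - i, h1, by ring⟩, ⟨y - j, h2, by ring⟩⟩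

lemma syz_closed {Δ : Set ℤ} {y γ : ℤ} (hy : y ∈ Syz α β Δ) (hγ : γ ∈ Gamma α β) :
    y + γ ∈ Syz α β Δ := by
  rw [mem_syz_iff] at hy ⊢
  obtain ⟨i, hi, j, hj, hij, h1, h2⟩ := hy
  refine ⟨i, hi, j, hj, hij, ?_, ?_⟩
  · rw [show y + γ - i = (y - i) + γ by ring]; exact gamma_add h1 hγ
  · rw [show y + γ - j = (y - j) + γ by ring]; exact gamma_add h2 hγ

end SyzGeneral

section SyzProfile

variable {α β : ℕ} {F : ℤ → ℤ}

/-- A representative of the class of `x` in the window `(s - α, s]`. -/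
lemma window_rep (hα : 0 < α) {P : Set ℤ} (hper : ∀ u : ℤ, u ∈ P ↔ u + (α:ℤ) ∈ P)
    {x : ℤ} (hx : x ∈ P) (s : ℤ) :
    ∃ w, w ∈ P ∧ s - α < w ∧ w ≤ s ∧ (α:ℤ) ∣ w - x := by
  have hα' : (0:ℤ) < α := Int.natCast_pos.mpr hα
  set k := (s - x) / (α:ℤ) with hk
  have h1 := Int.emod_lt_of_pos (s - x) hα'
  have h2 := Int.emod_add_mul_ediv (s - x) (α:ℤ)
  have h3 := Int.emod_nonneg (s - x) (show (α:ℤ) ≠ 0 by positivity)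
  refine ⟨x + k * α, per_shift hper x k hx, by nlinarith, by nlinarith, ⟨k, by ring⟩⟩

variable (hα : 2 ≤ α) (hαβ : α < β) (hcop : Nat.Coprime α β) (hF : IsProfile α β F)
  (hPne : (PosF β F).Nonempty)
  (htwo : ∃ u ∈ PosF β F, ∃ v ∈ PosF β F, ¬ (α:ℤ) ∣ u - v)

section
include hα hF hPne

lemma p1_mem (s : ℤ) : prevP (PosF β F) s ∈ PosF β F :=
  (prevP_spec (by omega) hPne (posF_per hF) s).1

lemma p1_le (s : ℤ) : prevP (PosF β F) s ≤ s :=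
  (prevP_spec (by omega) hPne (posF_per hF) s).2.1

lemma p1_max {s v : ℤ} (hv : v ∈ PosF β F) (hvs : v ≤ s) : v ≤ prevP (PosF β F) s :=
  (prevP_spec (by omega) hPne (posF_per hF) s).2.2 v hv hvs

lemma p1_gt (s : ℤ) : s - α < prevP (PosF β F) s :=
  prevP_gt (by omega) hPne (posF_per hF) s

include htwo in
/-- The second position `p₂ s` is still within the window `(s - α, s)`. -/
lemma p2_gt (s : ℤ) : s - α < prevP (PosF β F) (prevP (PosF β F) s - 1) := by
  obtain ⟨u, hu, v, hv, huv⟩ := htwo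
  obtain ⟨u', hu', hu1, hu2, hu3⟩ := window_rep (by omega) (posF_per hF) hu s
  obtain ⟨v', hv', hv1, hv2, hv3⟩ := window_rep (by omega) (posF_per hF) hv s
  have hne : u' ≠ v' := by
    rintro rfl
    have h := dvd_sub hv3 hu3
    rw [show u' - v - (u' - u) = u - v by ring] at h
    exact huv h
  -- the smaller of the two is < prevP P s
  have hu4 : u' ≤ prevP (PosF β F) s := p1_max hα hF hPne hu' hu2
  have hv4 : v' ≤ prevP (PosF β F) s := p1_max hα hF hPne hv' hv2
  rcases le_or_gt u' v' with h | h
  · have : u' ≤ prevP (PosF β F) s - 1 := by omega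
    have := p1_max hα hF hPne (s := prevP (PosF β F) s - 1) hu' this
    omega
  · have : v' ≤ prevP (PosF β F) s - 1 := by omega
    have := p1_max hα hF hPne (s := prevP (PosF β F) s - 1) hv' this
    omega

lemma syzF_class (s : ℤ) : (α:ℤ) ∣ SyzF α β F s - s * β := by
  rw [SyzF]
  generalize prevP (PosF β F) (prevP (PosF β F) s - 1) = a
  have h1 := hF.2.1 a
  have key : F a + (s - a) * β - s * β = F a - a * β := by ring
  rw [key]; exact h1

lemma syzF_periodic (s : ℤ) : SyzF α β F (s + α) = SyzF α β F s := by
  have h1 : prevP (PosF β F) (s + α) = prevP (PosF β F) s + α :=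
    prevP_shift (by omega) hPne (posF_per hF) s
  have h2 : prevP (PosF β F) (prevP (PosF β F) s - 1 + α)
      = prevP (PosF β F) (prevP (PosF β F) s - 1) + α :=
    prevP_shift (by omega) hPne (posF_per hF) _
  rw [SyzF, SyzF, h1, show prevP (PosF β F) s + (α:ℤ) - 1 = prevP (PosF β F) s - 1 + α by ring,
    h2, hF.1]
  ring

/-- Monotone step for the syzygy profile. -/
lemma syzF_step (s : ℤ) : SyzF α β F (s + 1) ≤ SyzF α β F s + β := by
  by_cases hmem : s + 1 ∈ PosF β F
  · have h1 : prevP (PosF β F) (s + 1) = s + 1 :=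
      prevP_self (by omega) hPne (posF_per hF) hmem
    rw [SyzF, SyzF, h1]
    have h2 : (s:ℤ) + 1 - 1 = s := by ring
    rw [h2]
    set a := prevP (PosF β F) (prevP (PosF β F) s - 1) with ha
    set b := prevP (PosF β F) s with hb
    have hab : a ≤ b := le_trans (p1_le hα hF hPne _) (by omega)
    have := F_mono hF hab
    nlinarith [this]
  · have h1 : prevP (PosF β F) (s + 1) = prevP (PosF β F) s := by
      rw [prevP_of_not_mem (by omega) hPne (posF_per hF) hmem]
      norm_num
    rw [SyzF, SyzF, h1]
    exact le_of_eq (by ring)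

/-- For `s ∈ P`, the "gap" of the syzygy profile at `s` is the gap of `F`
at the previous position. -/
lemma syzF_D {s : ℤ} (hs : s ∈ PosF β F) :
    SyzF α β F (s - 1) + β - SyzF α β F s
      = F (prevP (PosF β F) (s - 1) - 1) + β - F (prevP (PosF β F) (s - 1)) := by
  have h1 : prevP (PosF β F) s = s := prevP_self (by omega) hPne (posF_per hF) hs
  set b := prevP (PosF β F) (s - 1) with hb
  set a := prevP (PosF β F) (b - 1) with ha
  have hab : a ≤ b - 1 := p1_le hα hF hPne _
  have hflat : F (b - 1) = F a + (b - 1 - a) * β := by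
    refine F_flat hF ?_ hab
    intro u hu1 hu2
    exact prevP_free (by omega) hPne (posF_per hF) (b - 1) u hu1 hu2
  have e1 : SyzF α β F s = F b + (s - b) * β := by rw [SyzF, h1, ← hb]
  have e2 : SyzF α β F (s - 1) = F a + (s - 1 - a) * β := by rw [SyzF, ← hb, ← ha]
  rw [e1, e2, hflat]; ring

lemma pos_syzF {s : ℤ} : s ∈ PosF β (SyzF α β F) ↔ s ∈ PosF β F := by
  constructor
  · intro hs
    by_contra hmem
    have h1 : prevP (PosF β F) s = prevP (PosF β F) (s - 1) :=
      prevP_of_not_mem (by omega) hPne (posF_per hF) hmem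
    simp only [PosF, Set.mem_setOf_eq] at hs
    rw [SyzF, SyzF, h1] at hs
    nlinarith [hs]
  · intro hs
    have hD := syzF_D hα hF hPne hs
    have hb : prevP (PosF β F) (s - 1) ∈ PosF β F := p1_mem hα hF hPne _
    have hb' : F (prevP (PosF β F) (s - 1)) < F (prevP (PosF β F) (s - 1) - 1) + β := hb
    show SyzF α β F s < SyzF α β F (s - 1) + β
    omega

include hcop in
omit hPne in
/-- Lower bound for elements of towers over minimal generators. -/
lemma t_bound {y s w : ℤ} (h1 : s - (α:ℤ) < w) (h2 : w ≤ s)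
    (hy : y - F w ∈ Gamma α β) (hys : (α:ℤ) ∣ y - s * β) :
    F w + (s - w) * β ≤ y := by
  obtain ⟨q, hq0, hqα, hdq, hqle⟩ := gamma_canonical (by omega) hy
  have hFw := hF.2.1 w
  have hkey : (s - w - q) * β = -(y - s * β) + ((y - F w) - q * β) + (F w - w * β) := by
    ring
  have hd : (α:ℤ) ∣ (s - w - q) * β := by
    rw [hkey]
    exact dvd_add (dvd_add (dvd_neg.mpr hys) hdq) hFw
  have hd2 : (α:ℤ) ∣ s - w - q := dvd_of_dvd_mul_beta hcop hd
  have : s - w - q = 0 := eq_of_small_dvd hd2 (by omega) (by omega)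
  have hq : q = s - w := by omega
  rw [hq] at hqle
  omega

include htwo in
lemma syzF_isProfile : IsProfile α β (SyzF α β F) :=
  ⟨syzF_periodic hα hF hPne, syzF_class hα hF hPne, syzF_step hα hF hPne⟩

end

include hα hF hPne hcop htwo in
/-- Any element of the syzygy module in the class of `s * β` is at least `SyzF s`. -/
lemma syz_lower {y s : ℤ} (hy : y ∈ Syz α β (ProfSet α F)) (hys : (α:ℤ) ∣ y - s * β)
    (hαβ : α < β) : SyzF α β F s ≤ y := by
  rw [mem_syz_iff] at hy
  obtain ⟨i, hi, j, hj, hij, hyi, hyj⟩ := hy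
  obtain ⟨u, hu, rfl⟩ := (minGen_prof hF (by omega) hαβ hcop).mp hi
  obtain ⟨v, hv, rfl⟩ := (minGen_prof hF (by omega) hαβ hcop).mp hj
  obtain ⟨u', hu', hu1, hu2, hu3⟩ := window_rep (by omega) (posF_per hF) hu s
  obtain ⟨v', hv', hv1, hv2, hv3⟩ := window_rep (by omega) (posF_per hF) hv s
  have hFu : F u' = F u := F_congr hF hu3
  have hFv : F v' = F v := F_congr hF hv3
  set b := prevP (PosF β F) s with hb
  set a := prevP (PosF β F) (b - 1) with ha
  have huv : u' ≠ v' := by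
    rintro rfl
    exact hij (hFu ▸ hFv ▸ rfl)
  -- pick the witness not equal to b
  obtain ⟨w, hw, hwb, hyw⟩ : ∃ w, (w ∈ PosF β F ∧ s - α < w ∧ w ≤ s) ∧ w ≠ b
      ∧ y - F w ∈ Gamma α β := by
    by_cases hub : u' = b
    · exact ⟨v', ⟨hv', hv1, hv2⟩, fun h => huv (hub ▸ h ▸ rfl), hFv ▸ hyj⟩
    · exact ⟨u', ⟨hu', hu1, hu2⟩, hub, hFu ▸ hyi⟩
  obtain ⟨hwP, hw1, hw2⟩ := hw
  have hwb' : w ≤ b - 1 := by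
    have := p1_max hα hF hPne hwP hw2
    omega
  have hwa : w ≤ a := p1_max hα hF hPne hwP hwb'
  have hstep : F a ≤ F w + (a - w) * β := F_mono hF hwa
  have hbound : F w + (s - w) * β ≤ y := t_bound hα hcop hF hw1 hw2 hyw hys
  have hba : s - (α:ℤ) < a := p2_gt hα hF hPne htwo s
  have has : a ≤ s := le_trans (p1_le hα hF hPne _) (le_trans (by omega) (p1_le hα hF hPne s))
  rw [SyzF, ← hb, ← ha]
  nlinarith [hstep, hbound]

include hα hF hPne hcop htwo in
/-- `SyzF s` itself belongs to the syzygy module. -/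
lemma syzF_mem_syz (hαβ : α < β) (s : ℤ) : SyzF α β F s ∈ Syz α β (ProfSet α F) := by
  set b := prevP (PosF β F) s with hb
  set a := prevP (PosF β F) (b - 1) with ha
  have hbP : b ∈ PosF β F := p1_mem hα hF hPne s
  have haP : a ∈ PosF β F := p1_mem hα hF hPne _
  have hab : a ≤ b - 1 := p1_le hα hF hPne _
  have hbs : b ≤ s := p1_le hα hF hPne s
  have hbgt : s - (α:ℤ) < b := p1_gt hα hF hPne s
  have hagt : s - (α:ℤ) < a := p2_gt hα hF hPne htwo s
  have hflat : F (b - 1) = F a + (b - 1 - a) * β := by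
    refine F_flat hF ?_ hab
    intro x hx1 hx2
    exact prevP_free (by omega) hPne (posF_per hF) (b - 1) x hx1 hx2
  have hne : F b ≠ F a := by
    intro h
    have := F_inj hF hcop h
    have : b - a = 0 := eq_of_small_dvd this (by omega) (by omega)
    omega
  rw [mem_syz_iff]
  refine ⟨F b, (minGen_prof hF (by omega) hαβ hcop).mpr ⟨b, hbP, rfl⟩,
    F a, (minGen_prof hF (by omega) hαβ hcop).mpr ⟨a, haP, rfl⟩, hne, ?_, ?_⟩
  · -- SyzF s - F b = D(b) + (s - b) β ∈ Γ
    have hDpos : 0 ≤ F (b - 1) + (β:ℤ) - F b := by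
      have := hF.2.2 (b - 1)
      rw [show b - 1 + 1 = b by ring] at this
      omega
    have hDdvd : (α:ℤ) ∣ F (b - 1) + (β:ℤ) - F b := by
      have h1 := hF.2.1 (b - 1)
      have h2 := hF.2.1 b
      have : F (b - 1) + (β:ℤ) - F b = (F (b - 1) - (b - 1) * β) - (F b - b * β) := by ring
      rw [this]
      exact dvd_sub h1 h2
    rw [SyzF, ← hb, ← ha]
    have key : F a + (s - a) * β - F b - (s - b) * β = F (b - 1) + (β:ℤ) - F b := by
      rw [hflat]; ring
    exact gamma_mem_of (q := s - b) (by omega) (by rw [key]; exact hDdvd)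
      (by linarith [key, hDpos]) (by omega)
  · rw [SyzF, ← hb, ← ha]
    refine gamma_mem_of (q := s - a) (by omega) ?_ (le_of_eq (by ring)) (by omega)
    rw [show F a + (s - a) * (β:ℤ) - F a - (s - a) * β = 0 by ring]
    exact dvd_zero _

include hα hF hPne hcop htwo in
/-- The syzygy of the semimodule of a profile is the semimodule of the syzygy profile. -/
lemma syz_prof_eq (hαβ : α < β) : Syz α β (ProfSet α F) = ProfSet α (SyzF α β F) := by
  have hF' : IsProfile α β (SyzF α β F) := syzF_isProfile hα hF hPne htwo
  ext y
  constructor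
  · intro hy
    obtain ⟨s, hs⟩ := exists_class hcop y
    exact (mem_prof_iff hF' hcop hs).mpr (syz_lower hα hcop hF hPne htwo hy hs hαβ)
  · rintro ⟨s, hle, hdvd⟩
    have h1 := syzF_mem_syz hα hcop hF hPne htwo hαβ s
    rw [show y = SyzF α β F s + (y - SyzF α β F s) by ring]
    refine syz_closed h1 ?_
    exact gamma_mem_of (q := 0) le_rfl (by simpa using hdvd) (by omega) (by omega)

end SyzProfile

section Master

variable {α β : ℕ} {F : ℤ → ℤ}

/-- The master lemma: all iterated syzygies are semimodules of iterated syzygy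
profiles, with the same positions, and after `n + 1` steps the profile is a shift. -/
lemma master (hα : 2 ≤ α) (hαβ : α < β) (hcop : Nat.Coprime α β)
    (hF : IsProfile α β F) {n : ℕ} (hn : 1 ≤ n)
    (hcard : (minGenSet α β (ProfSet α F)).ncard = n + 1) :
    (∀ k : ℕ, IsProfile α β ((SyzF α β)^[k] F) ∧ PosF β ((SyzF α β)^[k] F) = PosF β F ∧
        (Syz α β)^[k] (ProfSet α F) = ProfSet α ((SyzF α β)^[k] F) ∧
        (minGenSet α β (ProfSet α ((SyzF α β)^[k] F))).ncard = n + 1) ∧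
    (∃ c : ℤ, (Syz α β)^[n+1] (ProfSet α F) = (fun x => c + x) '' ProfSet α F) := by
  have hα0 : 0 < α := by omega
  -- window facts
  set P := PosF β F with hPdef
  have hper : ∀ u : ℤ, u ∈ P ↔ u + (α:ℤ) ∈ P := posF_per hF
  have hwin0 : ∀ s₀ : ℤ, (P ∩ Set.Ioc (s₀ - α) s₀).ncard = n + 1 := fun s₀ => by
    rw [← minGen_card_eq_window hF hα hαβ hcop s₀, hcard]
  have hwfin : ∀ s₀ : ℤ, (P ∩ Set.Ioc (s₀ - (α:ℤ)) s₀).Finite := fun s₀ =>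
    (Set.finite_Ioc _ _).subset Set.inter_subset_right
  have hPne : P.Nonempty := by
    obtain ⟨u, hu, _⟩ := Set.nonempty_of_ncard_ne_zero (by rw [hwin0 0]; omega)
    exact ⟨u, hu⟩
  have htwo : ∃ u ∈ P, ∃ v ∈ P, ¬ (α:ℤ) ∣ u - v := by
    obtain ⟨u, hu, v, hv, huv⟩ := (Set.one_lt_ncard (hwfin 0)).mp (by rw [hwin0 0]; omega)
    refine ⟨u, hu.1, v, hv.1, fun hd => ?_⟩
    have hu2 := hu.2
    have hv2 := hv.2
    simp only [Set.mem_Ioc] at hu2 hv2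
    exact huv (by have := eq_of_small_dvd hd (by omega) (by omega); omega)
  -- the iteration invariant
  have hiter : ∀ k : ℕ, IsProfile α β ((SyzF α β)^[k] F) ∧
      PosF β ((SyzF α β)^[k] F) = P ∧
      (Syz α β)^[k] (ProfSet α F) = ProfSet α ((SyzF α β)^[k] F) := by
    intro k
    induction k with
    | zero => exact ⟨hF, rfl, rfl⟩
    | succ k ih =>
        obtain ⟨ih1, ih2, ih3⟩ := ih
        set G := (SyzF α β)^[k] F with hG
        have hGne : (PosF β G).Nonempty := ih2 ▸ hPne
        have hGtwo : ∃ u ∈ PosF β G, ∃ v ∈ PosF β G, ¬ (α:ℤ) ∣ u - v := ih2 ▸ htwo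
        have h1 : IsProfile α β (SyzF α β G) := syzF_isProfile hα ih1 hGne hGtwo
        have h2 : PosF β (SyzF α β G) = P := by
          rw [← ih2]
          ext u
          exact pos_syzF hα ih1 hGne
        have h3 : (Syz α β)^[k+1] (ProfSet α F) = ProfSet α (SyzF α β G) := by
          rw [Function.iterate_succ_apply', ih3]
          exact syz_prof_eq hα hcop ih1 hGne hGtwo hαβ
        rw [Function.iterate_succ_apply', ← hG]
        exact ⟨h1, h2, h3⟩
  have hcards : ∀ k : ℕ, (minGenSet α β (ProfSet α ((SyzF α β)^[k] F))).ncard = n + 1 := by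
    intro k
    obtain ⟨h1, h2, _⟩ := hiter k
    rw [minGen_card_eq_window h1 hα hαβ hcop 0, h2, hwin0 0]
  refine ⟨fun k => ⟨(hiter k).1, (hiter k).2.1, (hiter k).2.2, hcards k⟩, ?_⟩
  -- the D-rotation
  have hprev_mem : ∀ t : ℤ, prevStep P t ∈ P := fun t =>
    (prevP_spec hα0 hPne hper (t - 1)).1
  have hD : ∀ k : ℕ, ∀ s ∈ P,
      ((SyzF α β)^[k] F) (s - 1) + β - ((SyzF α β)^[k] F) s
        = F ((prevStep P)^[k] s - 1) + β - F ((prevStep P)^[k] s) := by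
    intro k
    induction k with
    | zero => intro s _; simp
    | succ k ih =>
        intro s hs
        obtain ⟨h1, h2, _⟩ := hiter k
        set G := (SyzF α β)^[k] F with hG
        have e1 : (SyzF α β)^[k+1] F = SyzF α β G := by
          rw [Function.iterate_succ_apply', ← hG]
        have hsG : s ∈ PosF β G := h2 ▸ hs
        have e2 := syzF_D hα h1 (h2 ▸ hPne) hsG
        rw [e1, e2, h2]
        have e3 : prevP P (s - 1) = prevStep P s := rfl
        rw [e3, ih (prevStep P s) (hprev_mem s)]
        rw [Function.iterate_succ_apply]
  -- after n+1 steps the gaps agree with those of F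
  set G := (SyzF α β)^[n+1] F with hG
  have hGprof : IsProfile α β G := (hiter (n+1)).1
  have hstep : ∀ s : ℤ, G s - G (s - 1) = F s - F (s - 1) := by
    intro s
    by_cases hs : s ∈ P
    · have h1 := hD (n+1) s hs
      have h2 : (prevStep P)^[n+1] s = s - α :=
        prev_iter_period hα0 hPne hper hs (hwin0 s)
      rw [h2] at h1
      rw [← hG] at h1
      have h3 : F (s - (α:ℤ) - 1) = F (s - 1) := by
        have := hF.1 (s - (α:ℤ) - 1)
        rw [show s - (α:ℤ) - 1 + α = s - 1 by ring] at this
        omega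
      have h4 : F (s - (α:ℤ)) = F s := by
        have := hF.1 (s - (α:ℤ))
        rw [show s - (α:ℤ) + α = s by ring] at this
        omega
      omega
    · -- off positions both gaps are β
      have hsG : s ∉ PosF β G := ((hiter (n+1)).2.1) ▸ hs
      have e1 : G s = G (s - 1) + β := by
        have hle := hGprof.2.2 (s - 1)
        rw [show s - 1 + 1 = s by ring] at hle
        simp only [PosF, Set.mem_setOf_eq, not_lt] at hsG
        omega
      have e2 : F s = F (s - 1) + β := by
        have hle := hF.2.2 (s - 1)
        rw [show s - 1 + 1 = s by ring] at hle
        simp only [hPdef, PosF, Set.mem_setOf_eq, not_lt] at hs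
        omega
      omega
  -- hence G = c + F
  set c := G 0 - F 0 with hc
  have hconst : ∀ s : ℤ, G s = c + F s := by
    have key : ∀ s : ℤ, G s - F s = G (s - 1) - F (s - 1) := fun s => by
      have := hstep s; omega
    intro s
    induction s using Int.induction_on with
    | zero => omega
    | succ m ihm =>
        have := key ((m:ℤ) + 1)
        rw [show (m:ℤ) + 1 - 1 = m by ring] at this
        omega
    | pred m ihm =>
        have h5 := key (-(m:ℤ))
        have h6 : G (-(m:ℤ) - 1) = c + F (-(m:ℤ) - 1) := by omega
        convert h6 using 2 <;> push_cast <;> ring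
  refine ⟨c, ?_⟩
  rw [(hiter (n+1)).2.2, ← hG]
  ext x
  constructor
  · rintro ⟨s, hle, hdvd⟩
    refine ⟨x - c, ⟨s, ?_, ?_⟩, by ring⟩
    · have := hconst s; omega
    · have := hconst s
      rw [show x - c - F s = x - G s by omega]
      exact hdvd
  · rintro ⟨y, ⟨s, hle, hdvd⟩, rfl⟩
    show c + y ∈ ProfSet α G
    refine ⟨s, by have := hconst s; omega, ?_⟩
    have := hconst s
    rw [show c + y - G s = y - F s by omega]
    exact hdvd

end Master

section Glue

variable {α β : ℕ}

lemma delta_profile (hα : 2 ≤ α) (hαβ : α < β) (hcop : Nat.Coprime α β)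
    {Δ : Set ℤ} (hne : Δ.Nonempty) (hbdd : ∃ m : ℤ, ∀ x ∈ Δ, m ≤ x)
    (hmod : ∀ x ∈ Δ, ∀ γ ∈ Gamma α β, x + γ ∈ Δ) :
    ∃ F : ℤ → ℤ, IsProfile α β F ∧ Δ = ProfSet α F := by
  have hα0 : 0 < α := by omega
  have hα' : (0:ℤ) < α := by exact_mod_cast hα0
  -- each class is nonempty
  have hclsne : ∀ s : ℤ, ∃ x, x ∈ Δ ∧ (α:ℤ) ∣ x - s * β := by
    intro s
    obtain ⟨x0, hx0⟩ := hne
    obtain ⟨t0, ht0⟩ := exists_class hcop (s * β - x0)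
    set t := t0 % (α:ℤ) with htdef
    have ht1 : 0 ≤ t := Int.emod_nonneg t0 (by positivity)
    have ht2 : (α:ℤ) ∣ t - t0 := by
      refine ⟨-(t0 / α), ?_⟩
      have h := Int.emod_add_mul_ediv t0 (α:ℤ)
      rw [mul_neg]
      omega
    refine ⟨x0 + t * β, hmod x0 hx0 _ (mem_gamma_iff.mpr ⟨0, t, le_rfl, ht1, by ring⟩), ?_⟩
    have key : x0 + t * β - s * β = -((s * β - x0) - t0 * β) + (t - t0) * β := by ring
    rw [key]
    exact dvd_add (dvd_neg.mpr ht0) (Dvd.dvd.mul_right ht2 _)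
  obtain ⟨m, hm⟩ := hbdd
  have hleast : ∀ s : ℤ, ∃ l : ℤ, (l ∈ Δ ∧ (α:ℤ) ∣ l - s * β) ∧
      ∀ x : ℤ, (x ∈ Δ ∧ (α:ℤ) ∣ x - s * β) → l ≤ x := fun s =>
    Int.exists_least_of_bdd ⟨m, fun x hx => hm x hx.1⟩ (hclsne s)
  choose F hF1 hF2 using hleast
  have hmem : ∀ s, F s ∈ Δ := fun s => (hF1 s).1
  have hcls : ∀ s, (α:ℤ) ∣ F s - s * β := fun s => (hF1 s).2
  have hprof : IsProfile α β F := by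
    refine ⟨?_, hcls, ?_⟩
    · intro s
      have e1 : (α:ℤ) ∣ F (s + α) - s * β := by
        have := hcls (s + α)
        have key : F (s + α) - s * β = (F (s + α) - (s + α) * β) + α * β := by push_cast; ring
        rw [key]
        exact dvd_add this ⟨β, rfl⟩
      have e2 : (α:ℤ) ∣ F s - (s + α) * β := by
        have := hcls s
        have key : F s - (s + α) * β = (F s - s * β) - α * β := by push_cast; ring
        rw [key]
        exact dvd_sub this ⟨β, rfl⟩
      exact le_antisymm (hF2 (s + α) (F s) ⟨hmem s, e2⟩) (hF2 s (F (s + α)) ⟨hmem (s + α), e1⟩)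
    · intro s
      refine hF2 (s + 1) (F s + β) ⟨hmod _ (hmem s) _ beta_mem_gamma, ?_⟩
      have key : F s + (β:ℤ) - (s + 1) * β = F s - s * β := by ring
      rw [key]
      exact hcls s
  refine ⟨F, hprof, ?_⟩
  ext x
  constructor
  · intro hx
    obtain ⟨s, hs⟩ := exists_class hcop x
    refine ⟨s, hF2 s x ⟨hx, hs⟩, ?_⟩
    have key : x - F s = (x - s * β) - (F s - s * β) := by ring
    rw [key]
    exact dvd_sub hs (hcls s)
  · rintro ⟨s, hle, hdvd⟩
    have : x = F s + (x - F s) := by ring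
    rw [this]
    exact hmod _ (hmem s) _ (gamma_mem_of (q := 0) le_rfl (by simpa using hdvd) (by omega) hα0)

end Glue

end SyzAux

/-- For an `⟨α,β⟩`-semimodule `Δ` with exactly `n + 1 ≥ 2` minimal generators,
the iterated syzygy `Syz^(n+1)(Δ)` is isomorphic to `Δ`; in other words the
sequence `Syz^(k)(Δ)` is periodic up to isomorphism with period `n + 1`. -/
theorem syz_periodic (α β : ℕ)
    (hα : 2 ≤ α) (hαβ : α < β) (hcop : Nat.Coprime α β)
    (Δ : Set ℤ) (hne : Δ.Nonempty) (hbdd : ∃ m : ℤ, ∀ x ∈ Δ, m ≤ x)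
    (hmod : ∀ x ∈ Δ, ∀ γ ∈ Gamma α β, x + γ ∈ Δ)
    (n : ℕ) (hn : 1 ≤ n) (hgen : (minGenSet α β Δ).ncard = n + 1) :
    (∃ c : ℤ, (Syz α β)^[n + 1] Δ = (fun x => c + x) '' Δ) ∧
    ∀ k : ℕ, ∃ c : ℤ,
      (Syz α β)^[k + (n + 1)] Δ = (fun x => c + x) '' ((Syz α β)^[k] Δ) := by
  obtain ⟨F, hF, hΔ⟩ := SyzAux.delta_profile hα hαβ hcop hne hbdd hmod
  subst hΔ
  obtain ⟨hiter, hper⟩ := SyzAux.master hα hαβ hcop hF hn hgen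
  refine ⟨hper, ?_⟩
  intro k
  obtain ⟨h1, h2, h3, h4⟩ := hiter k
  obtain ⟨_, c, hc⟩ := SyzAux.master hα hαβ hcop h1 hn h4
  refine ⟨c, ?_⟩
  rw [show k + (n + 1) = (n + 1) + k by ring, Function.iterate_add_apply, h3]
  exact hc
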